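/- If X ~ H'(θ,ν), then E(X) = θ. -/

import Mathlib

open MeasureTheory Real

/-- The Beta function. -/
noncomputable def Beta (a b : ℝ) : ℝ := Real.Gamma a * Real.Gamma b / Real.Gamma (a + b)

/-- The density of the `H'(θ,ν)` distribution of Leipnik/McCullagh on `(-1,1)`. -/
noncomputable def hDensity (θ ν x : ℝ) : ℝ :=
  (1 - θ ^ 2) / Beta (ν + 1 / 2) (1 / 2)
    * (1 - x ^ 2) ^ (ν - 1 / 2) / (1 - 2 * θ * x + θ ^ 2) ^ (ν + 1)

lemma key (θ ν u : ℝ) (hθ : θ ∈ Set.Ioo (-1:ℝ) 1) (hu : u ∈ Set.Ioo (-1:ℝ) 1) :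
    |(1-θ^2)/(1+θ*u)^2| * (((u+θ)/(1+θ*u) - θ) * hDensity θ ν ((u+θ)/(1+θ*u)))
    = u * ((1-θ^2)^((3:ℝ)/2) / Beta (ν+1/2) (1/2)
        * ((1-u^2)^(ν-1/2) / ((1+θ*u)^(ν+1) * (1-θ*u)^(ν+1)))) := by
  obtain ⟨hθ1, hθ2⟩ := hθ
  obtain ⟨hu1, hu2⟩ := hu
  have hT : 0 < 1 - θ^2 := by nlinarith
  have hs : 0 < 1 + θ*u := by nlinarith
  have ht : 0 < 1 - θ*u := by nlinarith
  have hA : 0 < 1 - u^2 := by nlinarith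
  set x := (u+θ)/(1+θ*u) with hxdef
  have hx2 : 1 - x^2 = (1-u^2)*(1-θ^2)/(1+θ*u)^2 := by
    rw [hxdef, div_pow, eq_div_iff (by positivity), sub_mul, div_mul_cancel₀ _ (by positivity)]
    ring
  have hxq : 1 - 2*θ*x + θ^2 = (1-θ^2)*(1-θ*u)/(1+θ*u) := by
    rw [hxdef]; field_simp [hs.ne']; ring
  have hxt : x - θ = u*(1-θ^2)/(1+θ*u) := by
    rw [hxdef, eq_div_iff hs.ne', sub_mul, div_mul_cancel₀ _ hs.ne']
    ring
  rw [hDensity, hx2, hxq, hxt]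
  rw [abs_of_pos (by positivity)]
  rw [Real.div_rpow (by positivity) (by positivity),
      Real.mul_rpow (le_of_lt hA) (le_of_lt hT),
      Real.div_rpow (by positivity) (by positivity),
      Real.mul_rpow (le_of_lt hT) (le_of_lt ht)]
  have e2p : ((1+θ*u)^2:ℝ)^(ν-1/2) = (1+θ*u)^(2*(ν-1/2)) := by
    rw [← Real.rpow_natCast (1+θ*u) 2, ← Real.rpow_mul hs.le]; norm_num
  rw [e2p]
  have eS : (1+θ*u)^(ν+1) / ((1+θ*u)^(3:ℕ) * (1+θ*u)^(2*(ν-1/2)))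
      = ((1+θ*u)^(ν+1))⁻¹ := by
    rw [← Real.rpow_natCast (1+θ*u) 3, ← Real.rpow_add hs, ← Real.rpow_sub hs,
        ← Real.rpow_neg hs.le]
    norm_num
    ring_nf
  have eT : (1-θ^2)^(3:ℕ) * (1-θ^2)^(ν-1/2) / (1-θ^2)^(ν+1) = (1-θ^2)^((3:ℝ)/2) := by
    rw [← Real.rpow_natCast (1-θ^2) 3, ← Real.rpow_add hT, ← Real.rpow_sub hT]
    norm_num
    congr 1
    ring
  calc (1-θ^2)/(1+θ*u)^2 * (u*(1-θ^2)/(1+θ*u) *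
        ((1-θ^2)/Beta (ν+1/2) (1/2) * ((1-u^2)^(ν-1/2) * (1-θ^2)^(ν-1/2) / (1+θ*u)^(2*(ν-1/2)))
          / ((1-θ^2)^(ν+1) * (1-θ*u)^(ν+1) / (1+θ*u)^(ν+1))))
      = u * (((1-θ^2)^(3:ℕ) * (1-θ^2)^(ν-1/2) / (1-θ^2)^(ν+1)) / Beta (ν+1/2) (1/2)
          * ((1-u^2)^(ν-1/2) *
            ((1+θ*u)^(ν+1) / ((1+θ*u)^(3:ℕ) * (1+θ*u)^(2*(ν-1/2)))) / (1-θ*u)^(ν+1))) := by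
        rw [div_div_eq_mul_div, div_mul_eq_mul_div, div_div]
        field_simp
    _ = u * ((1-θ^2)^((3:ℝ)/2) / Beta (ν+1/2) (1/2)
        * ((1-u^2)^(ν-1/2) / ((1+θ*u)^(ν+1) * (1-θ*u)^(ν+1)))) := by
        rw [eS, eT]
        field_simp

lemma Beta_pos {ν : ℝ} (hν : -1/2 < ν) : 0 < Beta (ν + 1/2) (1/2) := by
  have h1 : 0 < ν + 1/2 := by linarith
  have := Real.Gamma_pos_of_pos h1
  have := Real.Gamma_pos_of_pos (by norm_num : (0:ℝ) < 1/2)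
  have := Real.Gamma_pos_of_pos (show (0:ℝ) < ν + 1/2 + 1/2 by linarith)
  exact div_pos (mul_pos ‹0 < Real.Gamma (ν+1/2)› ‹0 < Real.Gamma (1/2)›) ‹_›

lemma Q_pos {θ x : ℝ} (hx : x ∈ Set.Ioo (-1:ℝ) 1) : 0 < 1 - 2*θ*x + θ^2 := by
  obtain ⟨h1, h2⟩ := hx
  nlinarith [sq_nonneg (x - θ)]

lemma hDensity_pos {θ ν x : ℝ} (hθ : θ ∈ Set.Ioo (-1:ℝ) 1) (hν : -1/2 < ν)
    (hx : x ∈ Set.Ioo (-1:ℝ) 1) : 0 < hDensity θ ν x := by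
  obtain ⟨hθ1, hθ2⟩ := hθ
  obtain ⟨h1, h2⟩ := hx
  have hT : 0 < 1 - θ^2 := by nlinarith
  have hA : 0 < 1 - x^2 := by nlinarith
  have hQ : 0 < 1 - 2*θ*x + θ^2 := Q_pos ⟨h1, h2⟩
  have hB := Beta_pos hν
  unfold hDensity
  exact div_pos (mul_pos (div_pos hT hB) (Real.rpow_pos_of_pos hA _))
    (Real.rpow_pos_of_pos hQ _)

lemma hDensity_meas (θ ν : ℝ) : Measurable (hDensity θ ν) := by
  unfold hDensity
  apply Measurable.div
  · apply Measurable.mul measurable_const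
    measurability
  · have h : Measurable fun y : ℝ => y ^ (ν+1) := by measurability
    exact h.comp
      ((measurable_const.sub (measurable_id.const_mul (2*θ))).add measurable_const)

/-- The Möbius map `u ↦ (u+θ)/(1+θu)` maps `Ioo (-1) 1` into itself. -/
lemma mobius_mem {θ u : ℝ} (hθ : θ ∈ Set.Ioo (-1:ℝ) 1) (hu : u ∈ Set.Ioo (-1:ℝ) 1) :
    (u + θ)/(1 + θ*u) ∈ Set.Ioo (-1:ℝ) 1 := by
  obtain ⟨hθ1, hθ2⟩ := hθ
  obtain ⟨hu1, hu2⟩ := hu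
  have hs : 0 < 1 + θ*u := by nlinarith
  constructor
  · rw [lt_div_iff₀ hs]; nlinarith
  · rw [div_lt_one hs]; nlinarith

lemma mobius_image {θ : ℝ} (hθ : θ ∈ Set.Ioo (-1:ℝ) 1) :
    (fun u => (u + θ)/(1 + θ*u)) '' Set.Ioo (-1:ℝ) 1 = Set.Ioo (-1:ℝ) 1 := by
  obtain ⟨hθ1, hθ2⟩ := hθ
  apply Set.Subset.antisymm
  · rintro x ⟨u, hu, rfl⟩
    exact mobius_mem ⟨hθ1, hθ2⟩ hu
  · intro x hx
    obtain ⟨hx1, hx2⟩ := hx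
    have h1 : 0 < 1 - θ*x := by nlinarith
    have h2 : (0:ℝ) < 1 - θ^2 := by nlinarith
    have hne : (1 - θ*x) ≠ 0 := ne_of_gt h1
    have hmem : (x - θ)/(1 - θ*x) ∈ Set.Ioo (-1:ℝ) 1 := by
      have h := mobius_mem (show -θ ∈ Set.Ioo (-1:ℝ) 1 from ⟨by linarith, by linarith⟩)
        ⟨hx1, hx2⟩
      have : (x + -θ)/(1 + -θ*x) = (x - θ)/(1 - θ*x) := by ring_nf
      rwa [this] at h
    refine ⟨(x - θ)/(1 - θ*x), hmem, ?_⟩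
    have e2 : 1 + θ*((x - θ)/(1 - θ*x)) = (1-θ^2)/(1-θ*x) := by
      field_simp
      ring
    show ((x - θ)/(1 - θ*x) + θ) / (1 + θ*((x - θ)/(1 - θ*x))) = x
    rw [e2, div_eq_iff (ne_of_gt (div_pos h2 h1))]
    rw [mul_div_assoc', eq_div_iff hne, add_mul, div_mul_cancel₀ _ hne]
    ring

/-- the odd-function integral vanishes -/
lemma odd_int_zero (θ ν : ℝ) :
    ∫ u in Set.Ioo (-1:ℝ) 1, u * ((1-θ^2)^((3:ℝ)/2) / Beta (ν+1/2) (1/2)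
        * ((1-u^2)^(ν-1/2) / ((1+θ*u)^(ν+1) * (1-θ*u)^(ν+1)))) = 0 := by
  set g : ℝ → ℝ := fun u => u * ((1-θ^2)^((3:ℝ)/2) / Beta (ν+1/2) (1/2)
        * ((1-u^2)^(ν-1/2) / ((1+θ*u)^(ν+1) * (1-θ*u)^(ν+1)))) with hg
  have hodd : ∀ u, g (-u) = - g u := by
    intro u
    simp only [hg]
    have e1 : 1 - (-u)^2 = 1 - u^2 := by ring
    have e2 : 1 + θ*(-u) = 1 - θ*u := by ring
    have e3 : 1 - θ*(-u) = 1 + θ*u := by ring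
    rw [e1, e2, e3]
    ring
  have h1 : ∫ u in Set.Ioo (-1:ℝ) 1, g u = ∫ u in (-1:ℝ)..1, g u := by
    rw [intervalIntegral.integral_of_le (by norm_num : (-1:ℝ) ≤ 1),
      integral_Ioc_eq_integral_Ioo]
  have h2 : ∫ u in (-1:ℝ)..1, g u = - ∫ u in (-1:ℝ)..1, g u := by
    conv_lhs => rw [show ∫ u in (-1:ℝ)..1, g u = ∫ u in (-1:ℝ)..1, g (-u) by
      rw [intervalIntegral.integral_comp_neg]; norm_num]
    simp only [hodd]
    rw [intervalIntegral.integral_neg]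
  rw [h1]
  linarith [h2]

lemma int_sub_zero {θ ν : ℝ} (hθ : θ ∈ Set.Ioo (-1:ℝ) 1) (hν : -1/2 < ν) :
    ∫ x in Set.Ioo (-1:ℝ) 1, (x - θ) * hDensity θ ν x = 0 := by
  obtain ⟨hθ1, hθ2⟩ := hθ
  have hderiv : ∀ u ∈ Set.Ioo (-1:ℝ) 1,
      HasDerivWithinAt (fun u => (u + θ)/(1 + θ*u)) ((1-θ^2)/(1+θ*u)^2)
        (Set.Ioo (-1:ℝ) 1) u := by
    intro u hu
    obtain ⟨hu1, hu2⟩ := hu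
    have hs : (1 + θ*u) ≠ 0 := by nlinarith
    have h := ((hasDerivAt_id u).add_const θ).div
        (((hasDerivAt_id u).const_mul θ).const_add 1) hs
    simp only [id_eq, mul_one, one_mul] at h
    have heq : (1+θ*u - (u+θ)*θ)/(1+θ*u)^2 = (1-θ^2)/(1+θ*u)^2 := by
      congr 1; ring
    rw [heq] at h
    exact h.hasDerivWithinAt
  have hinj : Set.InjOn (fun u => (u + θ)/(1 + θ*u)) (Set.Ioo (-1:ℝ) 1) := by
    intro u hu v hv h
    obtain ⟨hu1, hu2⟩ := hu
    obtain ⟨hv1, hv2⟩ := hv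
    have hsu : (1 + θ*u) ≠ 0 := by nlinarith
    have hsv : (1 + θ*v) ≠ 0 := by nlinarith
    simp only at h
    rw [div_eq_div_iff hsu hsv] at h
    have hz : (1 - θ^2) * (u - v) = 0 := by linear_combination h
    rcases mul_eq_zero.mp hz with h' | h'
    · nlinarith
    · linarith
  have himg := mobius_image ⟨hθ1, hθ2⟩
  calc ∫ x in Set.Ioo (-1:ℝ) 1, (x - θ) * hDensity θ ν x
      = ∫ x in (fun u => (u + θ)/(1 + θ*u)) '' Set.Ioo (-1:ℝ) 1,
          (x - θ) * hDensity θ ν x := by rw [himg]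
    _ = ∫ u in Set.Ioo (-1:ℝ) 1, |(1-θ^2)/(1+θ*u)^2| •
          (((u+θ)/(1+θ*u) - θ) * hDensity θ ν ((u+θ)/(1+θ*u))) :=
        integral_image_eq_integral_abs_deriv_smul measurableSet_Ioo hderiv hinj _
    _ = ∫ u in Set.Ioo (-1:ℝ) 1, u * ((1-θ^2)^((3:ℝ)/2) / Beta (ν+1/2) (1/2)
        * ((1-u^2)^(ν-1/2) / ((1+θ*u)^(ν+1) * (1-θ*u)^(ν+1)))) := by
        apply setIntegral_congr_fun measurableSet_Ioo
        intro u hu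
        simp only [smul_eq_mul]
        exact key θ ν u ⟨hθ1, hθ2⟩ hu
    _ = 0 := odd_int_zero θ ν

/-- if `X ~ H'(θ,ν)` then `E(X) = θ`. -/
theorem hprime_mean {α : Type*} [MeasurableSpace α] (P : Measure α)
    [IsProbabilityMeasure P] (θ ν : ℝ) (hθ : θ ∈ Set.Ioo (-1 : ℝ) 1) (hν : -1 / 2 < ν)
    (X : α → ℝ)
    (hX : Measure.map X P = volume.withDensity
      (fun x => ENNReal.ofReal ((Set.Ioo (-1 : ℝ) 1).indicator (hDensity θ ν) x))) :
    ∫ ω, X ω ∂P = θ := by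
  obtain ⟨hθ1, hθ2⟩ := hθ
  set I : Set ℝ := Set.Ioo (-1 : ℝ) 1 with hI
  set D : ℝ → ℝ := hDensity θ ν with hD
  set w : ℝ → ENNReal := fun x => ENNReal.ofReal (I.indicator D x) with hw
  have hDm : Measurable D := hDensity_meas θ ν
  have him : Measurable (I.indicator D) := hDm.indicator measurableSet_Ioo
  have hind_nonneg : ∀ x, 0 ≤ I.indicator D x := by
    intro x
    by_cases h : x ∈ I
    · rw [Set.indicator_of_mem h]
      exact (hDensity_pos ⟨hθ1, hθ2⟩ hν h).le
    · rw [Set.indicator_of_notMem h]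
  have hwm : Measurable w := him.ennreal_ofReal
  have hiw : ∀ x, w x = I.indicator (fun x => ENNReal.ofReal (D x)) x := by
    intro x
    by_cases h : x ∈ I <;> simp [hw, h]
  -- X is a.e. measurable
  have hXae : AEMeasurable X P := by
    by_contra hc
    rw [Measure.map_of_not_aemeasurable hc] at hX
    have h0 : (volume.withDensity w) I = 0 := by rw [← hX]; simp
    rw [withDensity_apply _ measurableSet_Ioo] at h0
    have hae : w =ᵐ[volume.restrict I] 0 :=
      (lintegral_eq_zero_iff hwm).mp h0
    have hne : (volume.restrict I) ≠ 0 := by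
      intro h
      rw [Measure.restrict_eq_zero] at h
      rw [hI, Real.volume_Ioo] at h
      simp at h
      norm_num at h
    haveI : Filter.NeBot (ae (volume.restrict I)) := ae_neBot.mpr hne
    obtain ⟨x, hx0, hxI⟩ := (hae.and (ae_restrict_mem measurableSet_Ioo)).exists
    have : 0 < D x := hDensity_pos ⟨hθ1, hθ2⟩ hν hxI
    have : w x ≠ 0 := by
      rw [hiw x, Set.indicator_of_mem hxI]
      simp [ENNReal.ofReal_pos.mpr this]
      linarith
    exact this hx0
  -- total mass 1
  haveI : IsProbabilityMeasure (Measure.map X P) := Measure.isProbabilityMeasure_map hXae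
  have hmass : ∫⁻ x in I, ENNReal.ofReal (D x) ∂volume = 1 := by
    have h1 : (volume.withDensity w) Set.univ = 1 := by
      rw [← hX]; exact measure_univ
    rw [withDensity_apply _ MeasurableSet.univ, Measure.restrict_univ] at h1
    rw [← h1]
    rw [← lintegral_indicator measurableSet_Ioo]
    exact lintegral_congr fun x => (hiw x).symm
  have hnonnegae : 0 ≤ᵐ[volume.restrict I] D := by
    filter_upwards [ae_restrict_mem measurableSet_Ioo] with x hx
    exact (hDensity_pos ⟨hθ1, hθ2⟩ hν hx).le
  have hInt : IntegrableOn D I := by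
    refine ⟨hDm.aestronglyMeasurable.restrict, ?_⟩
    rw [hasFiniteIntegral_iff_ofReal hnonnegae, hmass]
    exact ENNReal.one_lt_top
  have hIntD1 : ∫ x in I, D x = 1 := by
    rw [integral_eq_lintegral_of_nonneg_ae hnonnegae hDm.aestronglyMeasurable.restrict, hmass]
    simp
  have hIntxD : IntegrableOn (fun x => (x - θ) * D x) I := by
    refine Integrable.mono (hInt.const_mul 2) ?_ ?_
    · exact ((measurable_id.sub measurable_const).mul hDm).aestronglyMeasurable.restrict
    · filter_upwards [ae_restrict_mem measurableSet_Ioo] with x hx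
      obtain ⟨hx1, hx2⟩ := hx
      simp only [norm_mul, Real.norm_eq_abs]
      have : |x - θ| ≤ 2 := by rw [abs_le]; constructor <;> nlinarith
      calc |x - θ| * |D x| ≤ 2 * |D x| := by
            apply mul_le_mul_of_nonneg_right this (abs_nonneg _)
        _ = |2| * |D x| := by norm_num
  -- reduce to the density integral
  have hstep : ∫ ω, X ω ∂P = ∫ x in I, D x * x := by
    have hmap : ∫ ω, X ω ∂P = ∫ x, x ∂(Measure.map X P) :=
      (integral_map hXae aestronglyMeasurable_id).symm
    rw [hmap, hX]
    rw [show w = fun x => (((I.indicator D x).toNNReal : NNReal) : ENNReal) from rfl,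
      integral_withDensity_eq_integral_smul him.real_toNNReal (fun x => x)]
    have : ∀ x, ((I.indicator D x).toNNReal : NNReal) • x
        = I.indicator (fun x => D x * x) x := by
      intro x
      rw [NNReal.smul_def, smul_eq_mul, Real.coe_toNNReal _ (hind_nonneg x)]
      by_cases h : x ∈ I
      · rw [Set.indicator_of_mem h, Set.indicator_of_mem h]
      · rw [Set.indicator_of_notMem h, Set.indicator_of_notMem h, zero_mul]
    rw [integral_congr_ae (Filter.Eventually.of_forall this), integral_indicator measurableSet_Ioo]
  rw [hstep]
  have hsplit : ∀ x, D x * x = (x - θ) * D x + θ * D x := by intro x; ring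
  calc ∫ x in I, D x * x = ∫ x in I, ((x - θ) * D x + θ * D x) := by
        exact integral_congr_ae (Filter.Eventually.of_forall fun x => hsplit x)
    _ = (∫ x in I, (x - θ) * D x) + ∫ x in I, θ * D x :=
        integral_add hIntxD (hInt.const_mul θ)
    _ = 0 + θ * ∫ x in I, D x := by
        rw [int_sub_zero ⟨hθ1, hθ2⟩ hν, integral_const_mul]
    _ = θ := by rw [hIntD1]; ring
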